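/- Let P ∈ ℝ^{m×m} be symmetric, stochastic (nonnegative entries, each row summing to 1) and positive semidefinite, let p ≥ 1, and set σ = min{1, n^{2/p − 1}}. Then for all block vectors u = (u_1, …, u_m) and v = (v_1, …, v_m) with u_i, v_i ∈ ℝ^n, Σ_{i=1}^m ‖u_i − Σ_{j=1}^m P_{ij} u_j‖_2^2 ≤ (1/σ) Σ_{i=1}^m Σ_{j=1}^m P_{ij} ‖v_i − u_j‖_p^2, where ‖w‖_p = (Σ_{k=1}^n |w_k|^p)^{1/p}. -/

import Mathlib

open scoped RealInnerProductSpace BigOperators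

open scoped NNReal Matrix

/-- The ℓ_p norm on ℝ^n: `‖w‖_p = (Σ_k |w_k|^p)^(1/p)`. -/
noncomputable def lpnorm {n : ℕ} (p : ℝ) (w : EuclideanSpace ℝ (Fin n)) : ℝ :=
  (∑ k, |w k| ^ p) ^ (1 / p)

-- helper: a^t + b^t ≤ (a+b)^t for t ≥ 1, a,b ≥ 0
private lemma my_add_rpow {a b t : ℝ} (ha : 0 ≤ a) (hb : 0 ≤ b) (ht : 1 ≤ t) :
    a ^ t + b ^ t ≤ (a + b) ^ t := by
  have h := NNReal.add_rpow_le_rpow_add (⟨a, ha⟩ : ℝ≥0) ⟨b, hb⟩ ht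
  exact_mod_cast h

private lemma my_sum_rpow_le {ι : Type*} (s : Finset ι) (f : ι → ℝ) (hf : ∀ i, 0 ≤ f i)
    {t : ℝ} (ht : 1 ≤ t) : ∑ i ∈ s, f i ^ t ≤ (∑ i ∈ s, f i) ^ t := by
  classical
  induction s using Finset.induction with
  | empty => simp [Real.zero_rpow (by positivity : t ≠ 0)]
  | @insert a s ha ih =>
    rw [Finset.sum_insert ha, Finset.sum_insert ha]
    calc f a ^ t + ∑ i ∈ s, f i ^ t ≤ f a ^ t + (∑ i ∈ s, f i) ^ t := by linarith
      _ ≤ (f a + ∑ i ∈ s, f i) ^ t :=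
        my_add_rpow (hf a) (Finset.sum_nonneg fun i _ => hf i) ht

private lemma my_norm_sq {n : ℕ} (z : EuclideanSpace ℝ (Fin n)) :
    ‖z‖ ^ 2 = ∑ k, (z k) ^ 2 := by
  rw [EuclideanSpace.norm_eq, Real.sq_sqrt (Finset.sum_nonneg fun k _ => sq_nonneg _)]
  exact Finset.sum_congr rfl fun k _ => by rw [Real.norm_eq_abs, sq_abs]

private lemma my_sigma_norm {n : ℕ} {p : ℝ} (hp : 1 ≤ p) (hn : 0 < n)
    (w : EuclideanSpace ℝ (Fin n)) :
    min 1 ((n : ℝ) ^ (2 / p - 1)) * ‖w‖ ^ 2 ≤ lpnorm p w ^ 2 := by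
  have hp0 : 0 < p := lt_of_lt_of_le one_pos hp
  have hA : (0:ℝ) ≤ ∑ k, |w k| ^ p :=
    Finset.sum_nonneg fun k _ => Real.rpow_nonneg (abs_nonneg _) _
  have hlp : lpnorm p w ^ 2 = (∑ k, |w k| ^ p) ^ (2 / p) := by
    rw [lpnorm, ← Real.rpow_natCast ((∑ k, |w k| ^ p) ^ (1/p)) 2, ← Real.rpow_mul hA]
    congr 1
    push_cast
    field_simp
  have hns : ‖w‖ ^ 2 = ∑ k, (w k) ^ 2 := my_norm_sq w
  have e2 : ∀ k : Fin n, (|w k| ^ p) ^ (2 / p) = (w k) ^ 2 := by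
    intro k
    rw [← Real.rpow_mul (abs_nonneg (w k)), show p * (2/p) = 2 by field_simp,
      Real.rpow_two, sq_abs]
  rcases le_or_gt p 2 with hple | h2p
  · -- p ≤ 2 : σ ≤ 1, and ‖w‖₂² ≤ ‖w‖_p²
    have ht : 1 ≤ 2 / p := (one_le_div hp0).mpr hple
    have key : ∑ k, (w k) ^ 2 ≤ (∑ k, |w k| ^ p) ^ (2 / p) := by
      calc ∑ k, (w k) ^ 2 = ∑ k, (|w k| ^ p) ^ (2 / p) :=
            Finset.sum_congr rfl fun k _ => (e2 k).symm
        _ ≤ _ := my_sum_rpow_le _ _ (fun k => Real.rpow_nonneg (abs_nonneg _) _) ht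
    calc min 1 ((n : ℝ) ^ (2 / p - 1)) * ‖w‖ ^ 2 ≤ 1 * ‖w‖ ^ 2 :=
          mul_le_mul_of_nonneg_right (min_le_left _ _) (sq_nonneg _)
      _ = ∑ k, (w k) ^ 2 := by rw [one_mul, hns]
      _ ≤ _ := by rw [hlp]; exact key
  · -- 2 ≤ p
    have hq : 1 ≤ p / 2 := by linarith
    have hnR : (0:ℝ) < n := by exact_mod_cast hn
    have hwsum : ∑ k : Fin n, ((n:ℝ)⁻¹) = 1 := by
      simp [Finset.sum_const, Finset.card_univ]
      field_simp
    have hmean := Real.rpow_arith_mean_le_arith_mean_rpow Finset.univ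
      (fun _ : Fin n => (n:ℝ)⁻¹) (fun k => (w k) ^ 2)
      (fun _ _ => by positivity) hwsum (fun k _ => sq_nonneg _) hq
    -- hmean : (∑ k, n⁻¹ * (w k)^2) ^ (p/2) ≤ ∑ k, n⁻¹ * ((w k)^2) ^ (p/2)
    have hz : ∀ k : Fin n, ((w k) ^ 2 : ℝ) ^ (p/2) = |w k| ^ p := by
      intro k
      rw [← sq_abs, ← Real.rpow_two, ← Real.rpow_mul (abs_nonneg _),
        show (2:ℝ) * (p/2) = p by ring]
    have hX : (0:ℝ) ≤ ∑ k, (w k) ^ 2 := Finset.sum_nonneg fun k _ => sq_nonneg _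
    have hmean2 : ((n:ℝ)⁻¹ * ∑ k, (w k) ^ 2) ^ (p/2) ≤ (n:ℝ)⁻¹ * ∑ k, |w k| ^ p := by
      calc ((n:ℝ)⁻¹ * ∑ k, (w k) ^ 2) ^ (p/2)
          = (∑ k, (n:ℝ)⁻¹ * (w k) ^ 2) ^ (p/2) := by rw [Finset.mul_sum]
        _ ≤ ∑ k, (n:ℝ)⁻¹ * ((w k) ^ 2) ^ (p/2) := hmean
        _ = (n:ℝ)⁻¹ * ∑ k, |w k| ^ p := by
            rw [← Finset.mul_sum]
            exact congrArg _ (Finset.sum_congr rfl fun k _ => hz k)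
    -- raise to power 2/p
    have h2p0 : (0:ℝ) < 2 / p := by positivity
    have hstep := Real.rpow_le_rpow (Real.rpow_nonneg (by positivity) _) hmean2 (le_of_lt h2p0)
    rw [← Real.rpow_mul (by positivity), show (p/2) * (2/p) = 1 by field_simp, Real.rpow_one,
      Real.mul_rpow (by positivity) hA] at hstep
    -- hstep : n⁻¹ * ∑ (w k)^2 ≤ (n⁻¹)^(2/p) * (∑ |w k|^p)^(2/p)
    have hmin : min 1 ((n : ℝ) ^ (2 / p - 1)) ≤ (n : ℝ) ^ (2 / p - 1) := min_le_right _ _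
    have hpow : ((n:ℝ) ^ (2/p - 1)) * ((n:ℝ) * ((n:ℝ)⁻¹) ^ (2/p)) = 1 := by
      have e : (n:ℝ) * ((n:ℝ)⁻¹) ^ (2/p) = (n:ℝ) ^ (1 - 2/p) := by
        rw [Real.inv_rpow (le_of_lt hnR), Real.rpow_sub hnR, Real.rpow_one]
        ring
      rw [e, ← Real.rpow_add hnR]
      norm_num
    have hfin : (n:ℝ) ^ (2/p - 1) * ∑ k, (w k) ^ 2 ≤ (∑ k, |w k| ^ p) ^ (2/p) := by
      have h3 : ∑ k, (w k) ^ 2 ≤ (n:ℝ) * ((n:ℝ)⁻¹ ^ (2/p) * (∑ k, |w k| ^ p) ^ (2/p)) := by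
        rw [← mul_le_mul_iff_right₀ (show (0:ℝ) < (n:ℝ)⁻¹ by positivity)]
        calc (n:ℝ)⁻¹ * ∑ k, (w k) ^ 2 ≤ (n:ℝ)⁻¹ ^ (2/p) * (∑ k, |w k| ^ p) ^ (2/p) := hstep
          _ = (n:ℝ)⁻¹ * ((n:ℝ) * ((n:ℝ)⁻¹ ^ (2/p) * (∑ k, |w k| ^ p) ^ (2/p))) := by
              field_simp
      have hσnn : (0:ℝ) ≤ (n:ℝ) ^ (2/p - 1) := Real.rpow_nonneg (le_of_lt hnR) _
      calc (n:ℝ) ^ (2/p - 1) * ∑ k, (w k) ^ 2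
          ≤ (n:ℝ) ^ (2/p - 1) * ((n:ℝ) * ((n:ℝ)⁻¹ ^ (2/p) * (∑ k, |w k| ^ p) ^ (2/p))) :=
            mul_le_mul_of_nonneg_left h3 hσnn
        _ = ((n:ℝ) ^ (2/p - 1) * ((n:ℝ) * ((n:ℝ)⁻¹) ^ (2/p))) * (∑ k, |w k| ^ p) ^ (2/p) := by
            ring
        _ = (∑ k, |w k| ^ p) ^ (2/p) := by rw [hpow, one_mul]
    rw [hns, hlp]
    calc min 1 ((n : ℝ) ^ (2 / p - 1)) * ∑ k, (w k) ^ 2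
        ≤ (n:ℝ) ^ (2/p - 1) * ∑ k, (w k) ^ 2 := mul_le_mul_of_nonneg_right hmin hX
      _ ≤ _ := hfin

private lemma my_col_sum {m : ℕ} {P : Matrix (Fin m) (Fin m) ℝ} (hPsym : P.IsSymm)
    (hProw : ∀ i, ∑ j, P i j = 1) (j : Fin m) : ∑ i, P i j = 1 := by
  calc ∑ i, P i j = ∑ i, P j i := Finset.sum_congr rfl fun i _ => hPsym.apply j i
    _ = 1 := hProw j

private lemma my_one_sub_psd {m : ℕ} {P : Matrix (Fin m) (Fin m) ℝ} (hPsym : P.IsSymm)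
    (hPnn : ∀ i j, 0 ≤ P i j) (hProw : ∀ i, ∑ j, P i j = 1) (hPpsd : P.PosSemidef) :
    (1 - P).PosSemidef := by
  refine Matrix.PosSemidef.of_dotProduct_mulVec_nonneg ?_ ?_
  · exact Matrix.isHermitian_one.sub hPpsd.1
  · intro x
    rw [star_trivial, Matrix.sub_mulVec, Matrix.one_mulVec, dotProduct_sub, sub_nonneg]
    simp only [dotProduct, Matrix.mulVec]
    have h2 : (2:ℝ) * ∑ i, x i * ∑ j, P i j * x j
        ≤ ∑ i, ∑ j, (P i j * x i ^ 2 + P i j * x j ^ 2) := by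
      rw [Finset.mul_sum]
      refine Finset.sum_le_sum fun i _ => ?_
      rw [Finset.mul_sum, Finset.mul_sum]
      refine Finset.sum_le_sum fun j _ => ?_
      nlinarith [hPnn i j, sq_nonneg (x i - x j)]
    have h3 : ∑ i, ∑ j, (P i j * x i ^ 2 + P i j * x j ^ 2) = 2 * ∑ i, x i * x i := by
      simp only [Finset.sum_add_distrib]
      have e1 : ∑ i, ∑ j, P i j * x i ^ 2 = ∑ i : Fin m, x i ^ 2 := by
        refine Finset.sum_congr rfl fun i _ => ?_
        rw [← Finset.sum_mul, hProw i, one_mul]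
      have e2 : ∑ i, ∑ j, P i j * x j ^ 2 = ∑ j : Fin m, x j ^ 2 := by
        rw [Finset.sum_comm]
        refine Finset.sum_congr rfl fun j _ => ?_
        rw [← Finset.sum_mul, my_col_sum hPsym hProw j, one_mul]
      rw [e1, e2]
      simp only [← sq]
      ring
    linarith

open scoped MatrixOrder in
private lemma my_key_quad {m : ℕ} {P : Matrix (Fin m) (Fin m) ℝ} (hPsym : P.IsSymm)
    (hPnn : ∀ i j, 0 ≤ P i j) (hProw : ∀ i, ∑ j, P i j = 1) (hPpsd : P.PosSemidef)
    (x : Fin m → ℝ) :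
    ∑ i, (∑ j, P i j * x j) ^ 2 ≤ ∑ i, x i * ∑ j, P i j * x j := by
  have hres : (P - P * P).PosSemidef := by
    have hh := (my_one_sub_psd hPsym hPnn hProw hPpsd).mul_mul_conjTranspose_same (CFC.sqrt P)
    have hherm : (CFC.sqrt P).conjTranspose = CFC.sqrt P := (CFC.sqrt_nonneg P).isSelfAdjoint
    rw [hherm] at hh
    have key : ∀ S : Matrix (Fin m) (Fin m) ℝ, S * S = P →
        S * (1 - P) * S = P - P * P := by
      intro S h
      rw [← h]
      noncomm_ring
    rwa [key _ (CFC.sqrt_mul_sqrt_self P hPpsd.nonneg)] at hh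
  have h0 := hres.dotProduct_mulVec_nonneg x
  simp only [star_trivial, Matrix.sub_mulVec, dotProduct_sub, sub_nonneg] at h0
  have hPP : x ⬝ᵥ (P * P) *ᵥ x = ∑ i, (∑ j, P i j * x j) ^ 2 := by
    rw [← Matrix.mulVec_mulVec]
    rw [Matrix.dotProduct_mulVec]
    nth_rewrite 1 [← hPsym.eq]
    rw [Matrix.vecMul_transpose]
    simp only [dotProduct, Matrix.mulVec, sq]
  have hP1 : x ⬝ᵥ P *ᵥ x = ∑ i, x i * ∑ j, P i j * x j := by
    simp only [dotProduct, Matrix.mulVec]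
  rw [hPP, hP1] at h0
  exact h0

private lemma pilp_sum_apply {n : ℕ} {ι : Type*} (s : Finset ι)
    (f : ι → EuclideanSpace ℝ (Fin n)) (k : Fin n) :
    (∑ j ∈ s, f j) k = ∑ j ∈ s, f j k := by
  classical
  induction s using Finset.induction with
  | empty => rfl
  | @insert a s ha ih => rw [Finset.sum_insert ha, Finset.sum_insert ha, PiLp.add_apply, ih]

private lemma my_star_ineq {m : ℕ} {P : Matrix (Fin m) (Fin m) ℝ} (hPsym : P.IsSymm)
    (hPnn : ∀ i j, 0 ≤ P i j) (hProw : ∀ i, ∑ j, P i j = 1) (hPpsd : P.PosSemidef)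
    (x y : Fin m → ℝ) :
    ∑ i, (x i - ∑ j, P i j * x j) ^ 2 ≤ ∑ i, ∑ j, P i j * (y i - x j) ^ 2 := by
  set g : Fin m → ℝ := fun i => ∑ j, P i j * x j with hg
  have hq : ∑ i, g i ^ 2 ≤ ∑ i, x i * g i := by
    simpa [hg, sq] using my_key_quad hPsym hPnn hProw hPpsd x
  have ident : ∑ i, ∑ j, P i j * (y i - x j) ^ 2
      = ∑ i, y i ^ 2 - 2 * ∑ i, y i * g i + ∑ i, x i ^ 2 := by
    have per : ∀ i, ∑ j, P i j * (y i - x j) ^ 2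
        = y i ^ 2 - 2 * (y i * g i) + ∑ j, P i j * x j ^ 2 := by
      intro i
      have e : ∀ j, P i j * (y i - x j) ^ 2
          = P i j * y i ^ 2 - 2 * (y i * (P i j * x j)) + P i j * x j ^ 2 := fun j => by ring
      rw [Finset.sum_congr rfl fun j _ => e j, Finset.sum_add_distrib, Finset.sum_sub_distrib,
        ← Finset.sum_mul, hProw i, one_mul, ← Finset.mul_sum, ← Finset.mul_sum]
    rw [Finset.sum_congr rfl fun i _ => per i, Finset.sum_add_distrib, Finset.sum_sub_distrib,
      ← Finset.mul_sum]
    have e3 : ∑ i, ∑ j, P i j * x j ^ 2 = ∑ j : Fin m, x j ^ 2 := by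
      rw [Finset.sum_comm]
      refine Finset.sum_congr rfl fun j _ => ?_
      rw [← Finset.sum_mul, my_col_sum hPsym hProw j, one_mul]
    rw [e3]
  have E1 : ∑ i, (x i - g i) ^ 2 = ∑ i, x i ^ 2 - 2 * ∑ i, x i * g i + ∑ i, g i ^ 2 := by
    have e : ∀ i, (x i - g i) ^ 2 = x i ^ 2 - 2 * (x i * g i) + g i ^ 2 := fun i => by ring
    rw [Finset.sum_congr rfl fun i _ => e i, Finset.sum_add_distrib, Finset.sum_sub_distrib,
      ← Finset.mul_sum]
  have E2 : (0:ℝ) ≤ ∑ i, y i ^ 2 - 2 * ∑ i, y i * g i + ∑ i, g i ^ 2 := by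
    have e : ∀ i, (y i - g i) ^ 2 = y i ^ 2 - 2 * (y i * g i) + g i ^ 2 := fun i => by ring
    have := Finset.sum_nonneg (fun i (_ : i ∈ Finset.univ) => sq_nonneg (y i - g i))
    rwa [Finset.sum_congr rfl fun i _ => e i, Finset.sum_add_distrib, Finset.sum_sub_distrib,
      ← Finset.mul_sum] at this
  rw [ident, E1]
  linarith

/-- Lemma 3 of the paper: the consensus residual is bounded by the weighted
dispersion measured in the ℓ_p norm. -/
theorem residual_le_variance {m n : ℕ}
    (P : Matrix (Fin m) (Fin m) ℝ) (hPsym : P.IsSymm)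
    (hPnn : ∀ i j, 0 ≤ P i j) (hProw : ∀ i, ∑ j, P i j = 1)
    (hPpsd : P.PosSemidef)
    (p : ℝ) (hp : 1 ≤ p)
    (σ : ℝ) (hσ : σ = min 1 ((n : ℝ) ^ (2 / p - 1)))
    (u v : Fin m → EuclideanSpace ℝ (Fin n)) :
    ∑ i, ‖u i - ∑ j, P i j • u j‖ ^ 2 ≤
      (1 / σ) * ∑ i, ∑ j, P i j * lpnorm p (v i - u j) ^ 2 := by
  have hp0 : 0 < p := lt_of_lt_of_le one_pos hp
  have happ : ∀ (i : Fin m) (k : Fin n),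
      (u i - ∑ j, P i j • u j) k = u i k - ∑ j, P i j * u j k := by
    intro i k
    rw [PiLp.sub_apply, pilp_sum_apply]
    simp only [PiLp.smul_apply, smul_eq_mul]
  rcases Nat.eq_zero_or_pos n with hn | hn
  · subst hn
    have hz : ∀ z : EuclideanSpace ℝ (Fin 0), ‖z‖ = 0 := fun z => by
      rw [EuclideanSpace.norm_eq]; simp
    simp [hz, lpnorm, Real.zero_rpow (one_div_ne_zero (ne_of_gt hp0)),
      Real.zero_rpow (inv_ne_zero (ne_of_gt hp0))]
  · have hσpos : 0 < σ := by
      rw [hσ]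
      exact lt_min one_pos (Real.rpow_pos_of_pos (by exact_mod_cast hn) _)
    -- step 1: LHS as double sum
    have step1 : ∑ i, ‖u i - ∑ j, P i j • u j‖ ^ 2
        = ∑ k : Fin n, ∑ i, ((fun i' => u i' k) i - ∑ j, P i j * (fun i' => u i' k) j) ^ 2 := by
      rw [Finset.sum_comm]
      refine Finset.sum_congr rfl fun i _ => ?_
      rw [my_norm_sq]
      exact Finset.sum_congr rfl fun k _ => by rw [happ i k]
    have step2 : ∀ k : Fin n,
        ∑ i, ((fun i' => u i' k) i - ∑ j, P i j * (fun i' => u i' k) j) ^ 2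
          ≤ ∑ i, ∑ j, P i j * ((fun i' => v i' k) i - (fun i' => u i' k) j) ^ 2 := fun k =>
      my_star_ineq hPsym hPnn hProw hPpsd _ _
    have step3 : ∑ k : Fin n, ∑ i, ∑ j, P i j * (v i k - u j k) ^ 2
        = ∑ i, ∑ j, P i j * ‖v i - u j‖ ^ 2 := by
      rw [Finset.sum_comm]
      refine Finset.sum_congr rfl fun i _ => ?_
      rw [Finset.sum_comm]
      refine Finset.sum_congr rfl fun j _ => ?_
      rw [my_norm_sq, Finset.mul_sum]
      simp only [PiLp.sub_apply]
    have step4 : ∑ i, ∑ j, P i j * ‖v i - u j‖ ^ 2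
        ≤ (1 / σ) * ∑ i, ∑ j, P i j * lpnorm p (v i - u j) ^ 2 := by
      rw [Finset.mul_sum]
      refine Finset.sum_le_sum fun i _ => ?_
      rw [Finset.mul_sum]
      refine Finset.sum_le_sum fun j _ => ?_
      rw [mul_left_comm]
      refine mul_le_mul_of_nonneg_left ?_ (hPnn i j)
      have hs := my_sigma_norm hp hn (v i - u j)
      rw [← hσ] at hs
      rw [one_div, inv_mul_eq_div, le_div_iff₀ hσpos, mul_comm]
      exact hs
    calc ∑ i, ‖u i - ∑ j, P i j • u j‖ ^ 2
        ≤ ∑ k : Fin n, ∑ i, ∑ j, P i j * (v i k - u j k) ^ 2 := by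
          rw [step1]; exact Finset.sum_le_sum fun k _ => step2 k
      _ = ∑ i, ∑ j, P i j * ‖v i - u j‖ ^ 2 := step3
      _ ≤ _ := step4
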